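/- Stationarity condition for optimal measurement bases: let H₁,…,H_n be Hermitian operators on ℂ^n, and suppose the orthonormal basis (α₁,…,α_n) of ℂ^n maximizes J = Σ_{r=1}^n ⟨α_r, H_r α_r⟩ over all orthonormal bases of ℂ^n. Then ⟨α_i, (H_i − H_j) α_j⟩ = 0 for all i, j. -/

import Mathlib

open Matrix
open scoped BigOperators

private lemma herm_swap {n : ℕ} (M : Matrix (Fin n) (Fin n) ℂ) (hM : M.IsHermitian)
    (x y : Fin n → ℂ) :
    star y ⬝ᵥ M.mulVec x = star (star x ⬝ᵥ M.mulVec y) := by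
  rw [star_dotProduct, star_mulVec, ← dotProduct_mulVec, hM.eq]

theorem stmt15 {n : ℕ} (H : Fin n → Matrix (Fin n) (Fin n) ℂ)
    (hH : ∀ r, (H r).IsHermitian)
    (α : Fin n → (Fin n → ℂ))
    (hortho : ∀ i j, star (α i) ⬝ᵥ α j = if i = j then 1 else 0)
    (hmax : ∀ β : Fin n → (Fin n → ℂ),
      (∀ i j, star (β i) ⬝ᵥ β j = if i = j then 1 else 0) →
      ∑ r, (star (β r) ⬝ᵥ (H r).mulVec (β r)).re
        ≤ ∑ r, (star (α r) ⬝ᵥ (H r).mulVec (α r)).re) :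
    ∀ i j, star (α i) ⬝ᵥ ((H i - H j).mulVec (α j)) = 0 := by
  intro i j
  by_cases hij : i = j
  · subst hij; simp
  by_contra hc0
  set c : ℂ := star (α i) ⬝ᵥ ((H i - H j).mulVec (α j)) with hcdef
  have habs : (0:ℝ) < ‖c‖ := norm_pos_iff.mpr hc0
  have habs' : (‖c‖ : ℂ) ≠ 0 := by exact_mod_cast habs.ne'
  obtain ⟨z, hz1, hzc⟩ : ∃ z : ℂ, star z * z = 1 ∧ z * c = (‖c‖ : ℂ) := by
    have key : (starRingEnd ℂ) c * c = (‖c‖ : ℂ) * (‖c‖ : ℂ) := by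
      rw [mul_comm, Complex.mul_conj, Complex.normSq_eq_norm_sq]
      push_cast; ring
    refine ⟨(starRingEnd ℂ) c / (‖c‖), ?_, ?_⟩
    · rw [Complex.star_def, map_div₀, Complex.conj_conj, Complex.conj_ofReal,
        div_mul_div_comm, mul_comm c, key]
      field_simp
    · rw [div_mul_eq_mul_div, key]
      field_simp
  -- basic orthogonality facts
  have hii1 : star (α i) ⬝ᵥ α i = 1 := by simpa using hortho i i
  have hjj1 : star (α j) ⬝ᵥ α j = 1 := by simpa using hortho j j
  have hij0 : star (α i) ⬝ᵥ α j = 0 := by simpa [hij] using hortho i j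
  have hji0 : star (α j) ⬝ᵥ α i = 0 := by simpa [Ne.symm hij] using hortho j i
  -- abbreviations
  set w : ℂ := star (α i) ⬝ᵥ (H i).mulVec (α j) with hw
  set w' : ℂ := star (α i) ⬝ᵥ (H j).mulVec (α j) with hw'
  have hcww : c = w - w' := by rw [hcdef, sub_mulVec, dotProduct_sub]
  set A : ℝ := (star (α j) ⬝ᵥ (H i).mulVec (α j)).re + (star (α i) ⬝ᵥ (H j).mulVec (α i)).re
      - (star (α i) ⬝ᵥ (H i).mulVec (α i)).re - (star (α j) ⬝ᵥ (H j).mulVec (α j)).re with hA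
  set B : ℝ := 2 * ‖c‖ with hB
  have hBpos : 0 < B := by rw [hB]; positivity
  -- choice of rotation parameters
  set ε : ℝ := min (1/2) (B / (4*(|A|+1))) with hε
  have hεpos : 0 < ε := lt_min (by norm_num) (by positivity)
  have hεhalf : ε ≤ 1/2 := min_le_left _ _
  have hεB : ε ≤ B / (4*(|A|+1)) := min_le_right _ _
  set a : ℝ := (1 - ε^2)/(1 + ε^2) with ha
  set b : ℝ := 2*ε/(1 + ε^2) with hb
  have hden : (0:ℝ) < 1 + ε^2 := by positivity
  have hab : a^2 + b^2 = 1 := by rw [ha, hb]; field_simp; ring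
  have habC : (a:ℂ)^2 + (b:ℂ)^2 = 1 := by exact_mod_cast congrArg (Complex.ofReal) hab
  have hbpos : 0 < b := by rw [hb]; positivity
  have hapos : (1:ℝ)/2 ≤ a := by
    rw [ha, le_div_iff₀ hden]; nlinarith [hεhalf, hεpos]
  have hble : b ≤ 2*ε := by
    rw [hb, div_le_iff₀ hden]; nlinarith [sq_nonneg ε, hεpos]
  -- perturbed basis
  set β : Fin n → (Fin n → ℂ) := fun r =>
    if r = i then (a:ℂ) • α i + ((b:ℂ)*z) • α j
    else if r = j then (-((b:ℂ) * star z)) • α i + (a:ℂ) • α j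
    else α r with hβ
  have hβi : β i = (a:ℂ) • α i + ((b:ℂ)*z) • α j := by simp [hβ]
  have hβj : β j = (-((b:ℂ) * star z)) • α i + (a:ℂ) • α j := by
    simp [hβ, Ne.symm hij]
  have hβo : ∀ r, r ≠ i → r ≠ j → β r = α r := by
    intro r h1 h2; simp [hβ, h1, h2]
  clear_value c A B ε a b β
  -- orthonormality of β
  have horthoβ : ∀ r s, star (β r) ⬝ᵥ β s = if r = s then 1 else 0 := by
    intro r s
    by_cases hri : r = i
    · rw [hri]
      by_cases hsi : s = i
      · rw [hsi, if_pos rfl, hβi]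
        simp only [star_add, star_smul, add_dotProduct, dotProduct_add, smul_dotProduct,
          dotProduct_smul, smul_eq_mul, hii1, hjj1, hij0, hji0, star_mul', star_star,
          Complex.star_def, Complex.conj_ofReal, mul_zero, mul_one, zero_add, add_zero,
          neg_smul, dotProduct_neg, mul_neg, neg_mul, star_neg, Complex.conj_conj,
          neg_dotProduct, neg_neg]
        simp only [Complex.star_def] at hz1
        linear_combination (b:ℂ)^2 * hz1 + habC
      · by_cases hsj : s = j
        · rw [hsj, if_neg hij, hβi, hβj]
          simp only [star_add, star_smul, add_dotProduct, dotProduct_add, smul_dotProduct,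
            dotProduct_smul, smul_eq_mul, hii1, hjj1, hij0, hji0, star_mul', star_star,
            Complex.star_def, Complex.conj_ofReal, mul_zero, mul_one, zero_add, add_zero,
            neg_smul, dotProduct_neg, mul_neg, neg_mul, star_neg, Complex.conj_conj,
            neg_dotProduct, neg_neg]
          ring_nf
        · have hsi' : ¬ i = s := fun h => hsi h.symm
          have hsj' : ¬ j = s := fun h => hsj h.symm
          rw [if_neg hsi', hβi, hβo s hsi hsj]
          have h1 : star (α i) ⬝ᵥ α s = 0 := by simpa [hsi'] using hortho i s
          have h2 : star (α j) ⬝ᵥ α s = 0 := by simpa [hsj'] using hortho j s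
          simp only [star_add, star_smul, add_dotProduct, smul_dotProduct, smul_eq_mul,
            h1, h2, mul_zero, add_zero]
    · by_cases hrj : r = j
      · rw [hrj]
        by_cases hsi : s = i
        · rw [hsi, if_neg (Ne.symm hij), hβi, hβj]
          simp only [star_add, star_smul, add_dotProduct, dotProduct_add, smul_dotProduct,
            dotProduct_smul, smul_eq_mul, hii1, hjj1, hij0, hji0, star_mul', star_star,
            Complex.star_def, Complex.conj_ofReal, mul_zero, mul_one, zero_add, add_zero,
            neg_smul, dotProduct_neg, mul_neg, neg_mul, star_neg, Complex.conj_conj,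
            neg_dotProduct, neg_neg]
          ring_nf
        · by_cases hsj : s = j
          · rw [hsj, if_pos rfl, hβj]
            simp only [star_add, star_smul, add_dotProduct, dotProduct_add, smul_dotProduct,
              dotProduct_smul, smul_eq_mul, hii1, hjj1, hij0, hji0, star_mul', star_star,
              Complex.star_def, Complex.conj_ofReal, mul_zero, mul_one, zero_add, add_zero,
              neg_smul, dotProduct_neg, mul_neg, neg_mul, star_neg, Complex.conj_conj,
              neg_dotProduct, neg_neg]
            simp only [Complex.star_def] at hz1
            linear_combination (b:ℂ)^2 * hz1 + habC
          · have hsi' : ¬ i = s := fun h => hsi h.symm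
            have hsj' : ¬ j = s := fun h => hsj h.symm
            rw [if_neg hsj', hβj, hβo s hsi hsj]
            have h1 : star (α i) ⬝ᵥ α s = 0 := by simpa [hsi'] using hortho i s
            have h2 : star (α j) ⬝ᵥ α s = 0 := by simpa [hsj'] using hortho j s
            simp only [star_add, star_smul, add_dotProduct, smul_dotProduct, smul_eq_mul,
              h1, h2, mul_zero, add_zero, star_neg, neg_smul, neg_dotProduct,
              neg_zero, zero_add]
      · rw [hβo r hri hrj]
        by_cases hsi : s = i
        · rw [hsi, if_neg hri, hβi]
          have h1 : star (α r) ⬝ᵥ α i = 0 := by simpa [hri] using hortho r i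
          have h2 : star (α r) ⬝ᵥ α j = 0 := by simpa [hrj] using hortho r j
          simp only [dotProduct_add, dotProduct_smul, smul_eq_mul, h1, h2,
            mul_zero, add_zero]
        · by_cases hsj : s = j
          · rw [hsj, if_neg hrj, hβj]
            have h1 : star (α r) ⬝ᵥ α i = 0 := by simpa [hri] using hortho r i
            have h2 : star (α r) ⬝ᵥ α j = 0 := by simpa [hrj] using hortho r j
            simp only [dotProduct_add, dotProduct_smul, smul_eq_mul, h1, h2,
              mul_zero, add_zero, neg_smul, dotProduct_neg, neg_zero, zero_add]
          · rw [hβo s hsi hsj, hortho]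
  -- Hermitian swaps
  have hswapi : star (α j) ⬝ᵥ (H i).mulVec (α i) = (starRingEnd ℂ) w := herm_swap _ (hH i) _ _
  have hswapj : star (α j) ⬝ᵥ (H j).mulVec (α i) = (starRingEnd ℂ) w' := herm_swap _ (hH j) _ _
  have hz1' : (starRingEnd ℂ) z * z = 1 := hz1
  -- expansion of the diagonal terms
  have Ei : star (β i) ⬝ᵥ (H i).mulVec (β i)
      = ((a^2 : ℝ) : ℂ) * (star (α i) ⬝ᵥ (H i).mulVec (α i))
        + ((b^2 : ℝ) : ℂ) * ((starRingEnd ℂ) z * z) * (star (α j) ⬝ᵥ (H i).mulVec (α j))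
        + ((a*b : ℝ) : ℂ) * (z * w + (starRingEnd ℂ) (z * w)) := by
    rw [hβi]
    simp only [star_add, star_smul, add_dotProduct, dotProduct_add, mulVec_add,
      mulVec_smul, dotProduct_smul, smul_dotProduct, smul_eq_mul, star_mul', star_star,
      Complex.star_def, Complex.conj_ofReal, Complex.conj_conj, _root_.map_mul,
      hswapi, ← hw]
    push_cast
    ring
  have Ej : star (β j) ⬝ᵥ (H j).mulVec (β j)
      = ((b^2 : ℝ) : ℂ) * ((starRingEnd ℂ) z * z) * (star (α i) ⬝ᵥ (H j).mulVec (α i))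
        + ((a^2 : ℝ) : ℂ) * (star (α j) ⬝ᵥ (H j).mulVec (α j))
        - ((a*b : ℝ) : ℂ) * (z * w' + (starRingEnd ℂ) (z * w')) := by
    rw [hβj]
    simp only [star_add, star_smul, add_dotProduct, dotProduct_add, mulVec_add,
      mulVec_smul, dotProduct_smul, smul_dotProduct, smul_eq_mul, star_mul', star_star,
      Complex.star_def, Complex.conj_ofReal, Complex.conj_conj, _root_.map_mul,
      hswapj, ← hw', star_neg, neg_smul, neg_dotProduct, dotProduct_neg, mulVec_neg,
      mul_neg, neg_mul, neg_neg]
    push_cast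
    ring
  -- real parts
  have hFi : (star (β i) ⬝ᵥ (H i).mulVec (β i)).re
      = a^2 * (star (α i) ⬝ᵥ (H i).mulVec (α i)).re
        + b^2 * (star (α j) ⬝ᵥ (H i).mulVec (α j)).re + a*b*(2*(z*w).re) := by
    rw [Ei, hz1']
    simp only [Complex.add_re, Complex.re_ofReal_mul, mul_one, Complex.conj_re]
    ring
  have hFj : (star (β j) ⬝ᵥ (H j).mulVec (β j)).re
      = b^2 * (star (α i) ⬝ᵥ (H j).mulVec (α i)).re
        + a^2 * (star (α j) ⬝ᵥ (H j).mulVec (α j)).re - a*b*(2*(z*w').re) := by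
    rw [Ej, hz1']
    simp only [Complex.add_re, Complex.sub_re, Complex.re_ofReal_mul, mul_one,
      Complex.conj_re]
    ring
  have hzcre : (z*w).re - (z*w').re = ‖c‖ := by
    have h := congrArg Complex.re (by rw [← mul_sub, ← hcww, hzc] :
      (z*w) - (z*w') = (‖c‖ : ℂ))
    simpa [Complex.sub_re] using h
  -- sum splitting
  have hbound := hmax β horthoβ
  have hsum : ∑ r, (star (β r) ⬝ᵥ (H r).mulVec (β r)).re
      - ∑ r, (star (α r) ⬝ᵥ (H r).mulVec (α r)).re
      = ((star (β i) ⬝ᵥ (H i).mulVec (β i)).re - (star (α i) ⬝ᵥ (H i).mulVec (α i)).re)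
        + ((star (β j) ⬝ᵥ (H j).mulVec (β j)).re - (star (α j) ⬝ᵥ (H j).mulVec (α j)).re) := by
    rw [← Finset.sum_sub_distrib]
    rw [← Finset.sum_subset (Finset.subset_univ ({i, j} : Finset (Fin n)))
      (by intro r _ hr
          simp only [Finset.mem_insert, Finset.mem_singleton, not_or] at hr
          rw [hβo r hr.1 hr.2, sub_self])]
    rw [Finset.sum_pair hij]
  have hineq : ((star (β i) ⬝ᵥ (H i).mulVec (β i)).re - (star (α i) ⬝ᵥ (H i).mulVec (α i)).re)
        + ((star (β j) ⬝ᵥ (H j).mulVec (β j)).re - (star (α j) ⬝ᵥ (H j).mulVec (α j)).re)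
      ≤ 0 := by
    rw [← hsum]; linarith [hbound]
  have hval : ((star (β i) ⬝ᵥ (H i).mulVec (β i)).re - (star (α i) ⬝ᵥ (H i).mulVec (α i)).re)
        + ((star (β j) ⬝ᵥ (H j).mulVec (β j)).re - (star (α j) ⬝ᵥ (H j).mulVec (α j)).re)
      = b^2 * A + a*b*B := by
    rw [hFi, hFj, hA, hB]
    linear_combination ((star (α i) ⬝ᵥ (H i).mulVec (α i)).re
      + (star (α j) ⬝ᵥ (H j).mulVec (α j)).re) * hab + (2*a*b) * hzcre
  -- positivity of the variation
  have hAbs0 : (0:ℝ) ≤ |A| := abs_nonneg A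
  have hAbs2 : -|A| ≤ A := neg_abs_le A
  have hkey : ε * (4*(|A|+1)) ≤ B := (le_div_iff₀ (by positivity)).mp hεB
  have hkey' : 4*(ε*|A|) + 4*ε ≤ B := by
    rw [show ε*(4*(|A|+1)) = 4*(ε*|A|) + 4*ε from by ring] at hkey
    exact hkey
  have hba : b*(-|A|) ≤ b*A := mul_le_mul_of_nonneg_left hAbs2 hbpos.le
  have hb2 : b*|A| ≤ 2*ε*|A| := mul_le_mul_of_nonneg_right hble hAbs0
  have haB : (1/2)*B ≤ a*B := mul_le_mul_of_nonneg_right hapos hBpos.le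
  have h5 : 0 < b*A + a*B := by linarith
  have h6 : 0 < b*(b*A + a*B) := mul_pos hbpos h5
  rw [hval] at hineq
  linarith [h6]
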